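/- (Stackelberg, monotone decreasing case.) If (ln τ)·(k0 − k1) < 0 and k0 + k1 ≥ 0, then r is strictly decreasing on (0, ∞); in particular, for every d_max > 0 and every d ∈ (0, d_max), r(d_max) < r(d). -/

import Mathlib

/-- The Gaussian Q-function `Q(x) = (1/√(2π)) ∫_x^∞ exp(−t²/2) dt`. -/
noncomputable def gaussQ (x : ℝ) : ℝ :=
  (Real.sqrt (2 * Real.pi))⁻¹ * ∫ t in Set.Ioi x, Real.exp (-(t ^ 2 / 2))

lemma gauss_integrable : MeasureTheory.Integrable (fun t : ℝ => Real.exp (-(t ^ 2 / 2))) := by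
  have := integrable_exp_neg_mul_sq (b := (1/2 : ℝ)) (by norm_num)
  convert this using 2 with t
  ring_nf

lemma gaussQ_eq (x : ℝ) : gaussQ x = (Real.sqrt (2 * Real.pi))⁻¹ *
    ((∫ t in Set.Ioi (0:ℝ), Real.exp (-(t ^ 2 / 2)))
      - ∫ t in (0:ℝ)..x, Real.exp (-(t ^ 2 / 2))) := by
  have hf := gauss_integrable
  have h1 : ∀ y : ℝ, (∫ t in Set.Ioi y, Real.exp (-(t ^ 2 / 2)))
      = (∫ t : ℝ, Real.exp (-(t ^ 2 / 2))) - ∫ t in Set.Iic y, Real.exp (-(t ^ 2 / 2)) := by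
    intro y
    have := MeasureTheory.integral_add_compl (measurableSet_Iic (a := y)) hf
    rw [Set.compl_Iic] at this
    linarith [this]
  have h2 : (∫ t in (0:ℝ)..x, Real.exp (-(t ^ 2 / 2)))
      = (∫ t in Set.Iic x, Real.exp (-(t ^ 2 / 2)))
        - ∫ t in Set.Iic (0:ℝ), Real.exp (-(t ^ 2 / 2)) :=
    (intervalIntegral.integral_Iic_sub_Iic hf.integrableOn hf.integrableOn).symm
  rw [gaussQ, h1, h1, h2]
  ring

lemma gaussQ_hasDerivAt (x : ℝ) :
    HasDerivAt gaussQ (-((Real.sqrt (2 * Real.pi))⁻¹ * Real.exp (-(x ^ 2 / 2)))) x := by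
  have hc : Continuous fun t : ℝ => Real.exp (-(t ^ 2 / 2)) := by continuity
  have h := (hc.integral_hasStrictDerivAt 0 x).hasDerivAt
  have h2 : HasDerivAt (fun y : ℝ => (Real.sqrt (2 * Real.pi))⁻¹ *
      ((∫ t in Set.Ioi (0:ℝ), Real.exp (-(t ^ 2 / 2)))
        - ∫ t in (0:ℝ)..y, Real.exp (-(t ^ 2 / 2))))
      ((Real.sqrt (2 * Real.pi))⁻¹ * (0 - Real.exp (-(x ^ 2 / 2)))) x :=
    ((hasDerivAt_const x _).sub h).const_mul _
  have : gaussQ = fun y : ℝ => (Real.sqrt (2 * Real.pi))⁻¹ *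
      ((∫ t in Set.Ioi (0:ℝ), Real.exp (-(t ^ 2 / 2)))
        - ∫ t in (0:ℝ)..y, Real.exp (-(t ^ 2 / 2))) := funext gaussQ_eq
  rw [this]
  convert h2 using 1
  ring

/-- Stackelberg, monotone decreasing case: if `(ln τ)·(k0 − k1) < 0` and
`k0 + k1 ≥ 0`, the transmitter Bayes risk is strictly decreasing on `(0, ∞)`. -/
theorem stmt_7 (π0 π1 C00 C01 C10 C11 τ ζ : ℝ)
    (hπ0 : 0 < π0) (hπ1 : 0 < π1) (hτ : 0 < τ) (hζ : ζ = 1 ∨ ζ = -1)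
    (k0 k1 : ℝ)
    (hk0 : k0 = π0 * ζ * (C10 - C00) * τ ^ (-(1 / 2) : ℝ))
    (hk1 : k1 = π1 * ζ * (C01 - C11) * τ ^ ((1 / 2) : ℝ))
    (r : ℝ → ℝ)
    (hr : r = fun d : ℝ => π0 * C00 + π1 * C11
        + π0 * (C10 - C00) * gaussQ (ζ * (Real.log τ / d + d / 2))
        + π1 * (C01 - C11) * gaussQ (ζ * (-Real.log τ / d + d / 2)))
    (hcase1 : Real.log τ * (k0 - k1) < 0) (hcase2 : 0 ≤ k0 + k1) :
    StrictAntiOn r (Set.Ioi (0 : ℝ)) ∧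
    ∀ dmax : ℝ, 0 < dmax → ∀ d ∈ Set.Ioo (0 : ℝ) dmax, r dmax < r d := by
  set a := Real.log τ with ha
  set c := (Real.sqrt (2 * Real.pi))⁻¹ with hc
  have hcpos : 0 < c := by
    rw [hc]
    exact inv_pos.mpr (Real.sqrt_pos.mpr (by positivity))
  have hζ2 : ζ * ζ = 1 := by rcases hζ with h | h <;> simp [h]
  -- the derivative of r
  set r' : ℝ → ℝ := fun d =>
    -(c * Real.exp (-((a ^ 2 / d ^ 2 + d ^ 2 / 4) / 2)) *
      ((a / d ^ 2) * (k1 - k0) + (k0 + k1) / 2)) with hr'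
  have hderiv : ∀ d : ℝ, 0 < d → HasDerivAt r (r' d) d := by
    intro d hd
    have hdne : d ≠ 0 := ne_of_gt hd
    -- inner functions
    have hg0 : HasDerivAt (fun d : ℝ => ζ * (a / d + d / 2))
        (ζ * (-a / d ^ 2 + 1 / 2)) d := by
      have h1 : HasDerivAt (fun d : ℝ => a * d⁻¹ + d / 2) (a * (-(d ^ 2)⁻¹) + 1 / 2) d :=
        ((hasDerivAt_inv hdne).const_mul a).add ((hasDerivAt_id d).div_const 2)
      have h2 := h1.const_mul ζ
      have e : ζ * (a * (-(d ^ 2)⁻¹) + 1 / 2) = ζ * (-a / d ^ 2 + 1 / 2) := by ring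
      rw [e] at h2
      exact h2.congr_of_eventuallyEq (Filter.Eventually.of_forall fun y => by
        show ζ * (a / y + y / 2) = ζ * (a * y⁻¹ + y / 2); ring)
    have hg1 : HasDerivAt (fun d : ℝ => ζ * (-a / d + d / 2))
        (ζ * (a / d ^ 2 + 1 / 2)) d := by
      have h1 : HasDerivAt (fun d : ℝ => (-a) * d⁻¹ + d / 2) ((-a) * (-(d ^ 2)⁻¹) + 1 / 2) d :=
        ((hasDerivAt_inv hdne).const_mul (-a)).add ((hasDerivAt_id d).div_const 2)
      have h2 := h1.const_mul ζ
      have e : ζ * ((-a) * (-(d ^ 2)⁻¹) + 1 / 2) = ζ * (a / d ^ 2 + 1 / 2) := by ring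
      rw [e] at h2
      exact h2.congr_of_eventuallyEq (Filter.Eventually.of_forall fun y => by
        show ζ * (-a / y + y / 2) = ζ * ((-a) * y⁻¹ + y / 2); ring)
    have hQ0 := (gaussQ_hasDerivAt (ζ * (a / d + d / 2))).comp d hg0
    have hQ1 := (gaussQ_hasDerivAt (ζ * (-a / d + d / 2))).comp d hg1
    have hR : HasDerivAt r
        (π0 * (C10 - C00) * (-(c * Real.exp (-((ζ * (a / d + d / 2)) ^ 2 / 2)))
            * (ζ * (-a / d ^ 2 + 1 / 2)))
          + π1 * (C01 - C11) * (-(c * Real.exp (-((ζ * (-a / d + d / 2)) ^ 2 / 2)))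
            * (ζ * (a / d ^ 2 + 1 / 2)))) d := by
      rw [hr]
      exact (((hasDerivAt_const d (π0 * C00 + π1 * C11)).add
        (hQ0.const_mul (π0 * (C10 - C00)))).add
        (hQ1.const_mul (π1 * (C01 - C11)))).congr_deriv (by ring)
    convert hR using 1
    -- algebraic identity
    have e0 : Real.exp (-((ζ * (a / d + d / 2)) ^ 2 / 2))
        = Real.exp (-((a ^ 2 / d ^ 2 + d ^ 2 / 4) / 2)) * τ ^ (-(1 / 2) : ℝ) := by
      rw [Real.rpow_def_of_pos hτ, ← Real.exp_add]
      congr 1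
      have : (ζ * (a / d + d / 2)) ^ 2 = a ^ 2 / d ^ 2 + a + d ^ 2 / 4 := by
        field_simp
        ring_nf
        rw [show ζ ^ 2 = 1 by rw [sq]; exact hζ2]
        ring
      rw [this]; ring
    have e1 : Real.exp (-((ζ * (-a / d + d / 2)) ^ 2 / 2))
        = Real.exp (-((a ^ 2 / d ^ 2 + d ^ 2 / 4) / 2)) * τ ^ ((1 / 2) : ℝ) := by
      rw [Real.rpow_def_of_pos hτ, ← Real.exp_add]
      congr 1
      have : (ζ * (-a / d + d / 2)) ^ 2 = a ^ 2 / d ^ 2 - a + d ^ 2 / 4 := by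
        field_simp
        ring_nf
        rw [show ζ ^ 2 = 1 by rw [sq]; exact hζ2]
        ring
      rw [this]; ring
    rw [hr', e0, e1]
    have hk0' : π0 * (C10 - C00) * τ ^ (-(1 / 2) : ℝ) = k0 * ζ := by
      rw [hk0]; ring_nf; rw [show ζ ^ 2 = 1 by rw [sq]; exact hζ2]; ring
    have hk1' : π1 * (C01 - C11) * τ ^ ((1 / 2) : ℝ) = k1 * ζ := by
      rw [hk1]; ring_nf; rw [show ζ ^ 2 = 1 by rw [sq]; exact hζ2]; ring
    have expand : π0 * (C10 - C00) * (-(c * (Real.exp (-((a ^ 2 / d ^ 2 + d ^ 2 / 4) / 2)) *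
          τ ^ (-(1 / 2) : ℝ))) * (ζ * (-a / d ^ 2 + 1 / 2)))
        + π1 * (C01 - C11) * (-(c * (Real.exp (-((a ^ 2 / d ^ 2 + d ^ 2 / 4) / 2)) *
          τ ^ ((1 / 2) : ℝ))) * (ζ * (a / d ^ 2 + 1 / 2)))
        = -(c * Real.exp (-((a ^ 2 / d ^ 2 + d ^ 2 / 4) / 2)) *
          ((k0 * (ζ * ζ)) * (-a / d ^ 2 + 1 / 2) + (k1 * (ζ * ζ)) * (a / d ^ 2 + 1 / 2))) := by
      have t0 : π0 * (C10 - C00) * (-(c * (Real.exp (-((a ^ 2 / d ^ 2 + d ^ 2 / 4) / 2)) *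
            τ ^ (-(1 / 2) : ℝ))) * (ζ * (-a / d ^ 2 + 1 / 2)))
          = -(c * Real.exp (-((a ^ 2 / d ^ 2 + d ^ 2 / 4) / 2)) *
            ((k0 * ζ) * (ζ * (-a / d ^ 2 + 1 / 2)))) := by rw [← hk0']; ring
      have t1 : π1 * (C01 - C11) * (-(c * (Real.exp (-((a ^ 2 / d ^ 2 + d ^ 2 / 4) / 2)) *
            τ ^ ((1 / 2) : ℝ))) * (ζ * (a / d ^ 2 + 1 / 2)))
          = -(c * Real.exp (-((a ^ 2 / d ^ 2 + d ^ 2 / 4) / 2)) *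
            ((k1 * ζ) * (ζ * (a / d ^ 2 + 1 / 2)))) := by rw [← hk1']; ring
      rw [t0, t1]; ring
    rw [expand, hζ2]
    ring_nf
  -- negativity of the derivative
  have hneg : ∀ d : ℝ, 0 < d → r' d < 0 := by
    intro d hd
    rw [hr']
    have haT : 0 < a * (k1 - k0) := by nlinarith
    have hb : 0 < (a / d ^ 2) * (k1 - k0) + (k0 + k1) / 2 := by
      have : 0 < (a * (k1 - k0)) / d ^ 2 := div_pos haT (by positivity)
      have h2 : (a / d ^ 2) * (k1 - k0) = (a * (k1 - k0)) / d ^ 2 := by ring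
      rw [h2]; linarith
    have : 0 < c * Real.exp (-((a ^ 2 / d ^ 2 + d ^ 2 / 4) / 2)) *
        ((a / d ^ 2) * (k1 - k0) + (k0 + k1) / 2) := by positivity
    linarith
  have hSA : StrictAntiOn r (Set.Ioi (0 : ℝ)) := by
    have hint : interior (Set.Ioi (0:ℝ)) = Set.Ioi 0 := interior_Ioi
    apply strictAntiOn_of_hasDerivWithinAt_neg (f' := r') (convex_Ioi 0)
    · intro x hx
      exact ((hderiv x hx).differentiableAt.continuousAt).continuousWithinAt
    · intro x hx
      rw [hint] at hx ⊢
      exact (hderiv x hx).hasDerivWithinAt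
    · intro x hx
      rw [hint] at hx
      exact hneg x hx
  refine ⟨hSA, fun dmax hdmax d hd => ?_⟩
  exact hSA (Set.mem_Ioi.mpr hd.1) (Set.mem_Ioi.mpr (lt_trans hd.1 hd.2)) hd.2
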